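/- Let A ⊆ ℝ^d be a set of d+2 points in general position (every d+1 of them affinely independent), and suppose A admits a partition A = X₁ ⊔ X₂ with |X₁| ≥ 3 and |X₂| ≥ 3 such that conv X₁ ∩ conv X₂ ≠ ∅. Then the convex hull of A cannot be written as the union of two d-simplices with vertex sets contained in A whose interiors are disjoint; that is, there do not exist subsets S, T ⊆ A, each consisting of d+1 affinely independent points, with conv A = (conv S) ∪ (conv T) and interior(conv S) ∩ interior(conv T) = ∅. -/

import Mathlib

open Finset

/-- Any affine dependence on `A` that vanishes at one point of `A` vanishes identically,
when `A` consists of `d+2` points in general position. -/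
lemma aux_vanish {d : ℕ} {A : Set (Fin d → ℝ)} (hfin : A.Finite)
    (hcard : Nat.card A = d + 2)
    (hgenpos : ∀ B ⊆ A, Nat.card B = d + 1 →
      AffineIndependent ℝ (fun p : B => (p : Fin d → ℝ)))
    (w : (Fin d → ℝ) → ℝ)
    (h0 : ∑ x ∈ hfin.toFinset, w x = 0)
    (h1 : ∑ x ∈ hfin.toFinset, w x • x = 0)
    {a : Fin d → ℝ} (ha : a ∈ A) (hwa : w a = 0) :
    ∀ x ∈ A, w x = 0 := by
  classical
  intro x hx
  by_cases hxa : x = a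
  · rw [hxa]; exact hwa
  have haF : a ∈ hfin.toFinset := hfin.mem_toFinset.2 ha
  have hFcard : (hfin.toFinset).card = d + 2 := by
    rw [← Set.ncard_coe_finset, hfin.coe_toFinset, ← Nat.card_coe_set_eq, hcard]
  set E := hfin.toFinset.erase a with hE
  have hBsub : (↑E : Set (Fin d → ℝ)) ⊆ A := by
    intro z hz
    have : z ∈ E := hz
    exact hfin.mem_toFinset.1 (Finset.mem_of_mem_erase this)
  have hBcard : Nat.card ↥(↑E : Set (Fin d → ℝ)) = d + 1 := by
    rw [Nat.card_coe_set_eq, Set.ncard_coe_finset, hE,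
      Finset.card_erase_of_mem haF, hFcard]
    omega
  have hAI := hgenpos _ hBsub hBcard
  rw [affineIndependent_iff] at hAI
  have hmemE : ∀ z, z ∈ E ↔ z ∈ (↑E : Set (Fin d → ℝ)) := fun z => Iff.rfl
  have hsum0 : ∑ p : ↥(↑E : Set (Fin d → ℝ)), w ↑p = 0 := by
    rw [← Finset.sum_subtype E hmemE w, hE, Finset.sum_erase_eq_sub haF, h0, hwa, sub_zero]
  have hsum1 : ∑ p : ↥(↑E : Set (Fin d → ℝ)), w ↑p • (p : Fin d → ℝ) = 0 := by
    rw [← Finset.sum_subtype E hmemE (fun z => w z • z), hE,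
      Finset.sum_erase_eq_sub haF, h1, hwa, zero_smul, sub_zero]
  have hxE : x ∈ E := Finset.mem_erase.2 ⟨hxa, hfin.mem_toFinset.2 hx⟩
  exact hAI Finset.univ (fun p => w ↑p) hsum0 hsum1 ⟨x, hxE⟩ (Finset.mem_univ _)

/-- There is an affine dependence on `A` that is nonzero at every point of `A`. -/
lemma aux_exists {d : ℕ} {A : Set (Fin d → ℝ)} (hfin : A.Finite)
    (hcard : Nat.card A = d + 2)
    (hgenpos : ∀ B ⊆ A, Nat.card B = d + 1 →
      AffineIndependent ℝ (fun p : B => (p : Fin d → ℝ))) :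
    ∃ l : (Fin d → ℝ) → ℝ, ∑ x ∈ hfin.toFinset, l x = 0 ∧
      ∑ x ∈ hfin.toFinset, l x • x = 0 ∧ ∀ x ∈ A, l x ≠ 0 := by
  classical
  haveI : Fintype ↥A := hfin.fintype
  have hnAI : ¬ AffineIndependent ℝ (fun p : ↥A => (p : Fin d → ℝ)) := by
    intro hAI
    have h1 := hAI.card_le_finrank_succ
    have h2 : Module.finrank ℝ
        (vectorSpan ℝ (Set.range (fun p : ↥A => (p : Fin d → ℝ)))) ≤
        Module.finrank ℝ (Fin d → ℝ) := Submodule.finrank_le _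
    rw [Module.finrank_fin_fun] at h2
    have h3 : Fintype.card ↥A = d + 2 := by rw [← Nat.card_eq_fintype_card, hcard]
    omega
  rw [affineIndependent_iff] at hnAI
  push_neg at hnAI
  obtain ⟨s, w, hw0, hw1, e, hes, hwe⟩ := hnAI
  set l : (Fin d → ℝ) → ℝ :=
    fun x => if h : x ∈ A then (if (⟨x, h⟩ : ↥A) ∈ s then w ⟨x, h⟩ else 0) else 0 with hl
  have hlval : ∀ p : ↥A, l ↑p = if p ∈ s then w p else 0 := by
    intro p
    rw [hl]
    simp only [dif_pos p.2, Subtype.coe_eta]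
  have hmemA : ∀ z, z ∈ hfin.toFinset ↔ z ∈ A := fun z => hfin.mem_toFinset
  have hsum0 : ∑ x ∈ hfin.toFinset, l x = 0 := by
    rw [Finset.sum_subtype hfin.toFinset hmemA l]
    rw [Finset.sum_congr rfl (fun p _ => hlval p)]
    rw [Finset.sum_ite_mem Finset.univ s w, Finset.univ_inter]
    exact hw0
  have hsum1 : ∑ x ∈ hfin.toFinset, l x • x = 0 := by
    rw [Finset.sum_subtype hfin.toFinset hmemA (fun z => l z • z)]
    have : ∀ p : ↥A, l ↑p • (p : Fin d → ℝ) =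
        if p ∈ s then w p • (p : Fin d → ℝ) else 0 := by
      intro p
      rw [hlval p]
      split_ifs <;> simp
    rw [Finset.sum_congr rfl (fun p _ => this p)]
    rw [Finset.sum_ite_mem Finset.univ s (fun p : ↥A => w p • (p : Fin d → ℝ)),
      Finset.univ_inter]
    exact hw1
  have hlne : l ↑e ≠ 0 := by rw [hlval e, if_pos hes]; exact hwe
  refine ⟨l, hsum0, hsum1, ?_⟩
  intro x hx h
  exact hlne (aux_vanish hfin hcard hgenpos l hsum0 hsum1 hx h ↑e e.2)

/-- A point whose barycentric coordinates w.r.t. an affinely independent spanning set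
are all positive lies in the interior of the convex hull. -/
lemma aux_interior {d : ℕ} {S : Set (Fin d → ℝ)} (hfinS : S.Finite)
    (hai : AffineIndependent ℝ (fun p : S => (p : Fin d → ℝ)))
    (hcardS : Nat.card S = d + 1)
    (w : (Fin d → ℝ) → ℝ) (hw1 : ∑ x ∈ hfinS.toFinset, w x = 1)
    (hwpos : ∀ x ∈ S, 0 < w x) :
    ∑ x ∈ hfinS.toFinset, w x • x ∈ interior (convexHull ℝ S) := by
  classical
  haveI : Fintype ↥S := hfinS.fintype
  have hc : Fintype.card ↥S = d + 1 := by rw [← Nat.card_eq_fintype_card, hcardS]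
  have htop : affineSpan ℝ (Set.range fun p : ↥S => (p : Fin d → ℝ)) = ⊤ :=
    hai.affineSpan_eq_top_iff_card_eq_finrank_add_one.mpr
      (by rw [hc, Module.finrank_fin_fun])
  let b : AffineBasis ↥S ℝ (Fin d → ℝ) := ⟨fun p => ↑p, hai, htop⟩
  have hb : ⇑b = fun p : ↥S => (p : Fin d → ℝ) := rfl
  have hmemS : ∀ z, z ∈ hfinS.toFinset ↔ z ∈ S := fun z => hfinS.mem_toFinset
  have hsum : ∑ p : ↥S, w ↑p = 1 := by
    rw [← Finset.sum_subtype hfinS.toFinset hmemS w]; exact hw1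
  have hcomb : Finset.univ.affineCombination ℝ b (fun p : ↥S => w ↑p) =
      ∑ x ∈ hfinS.toFinset, w x • x := by
    rw [Finset.affineCombination_eq_linear_combination _ _ _ hsum,
      Finset.sum_subtype hfinS.toFinset hmemS (fun z => w z • z)]
    rfl
  rw [← hcomb]
  have hmem := b.interior_convexHull
  rw [hb, Subtype.range_coe] at hmem
  rw [hmem]
  intro i
  rw [b.coord_apply_combination_of_mem (Finset.mem_univ i) hsum]
  exact hwpos ↑i i.2

set_option maxHeartbeats 1600000 in
theorem no_splitting_into_two_simplices
    (d : ℕ) (A : Set (Fin d → ℝ)) (hfin : A.Finite)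
    (hcard : Nat.card A = d + 2)
    (hgenpos : ∀ B ⊆ A, Nat.card B = d + 1 →
      AffineIndependent ℝ (fun p : B => (p : Fin d → ℝ)))
    (X₁ X₂ : Set (Fin d → ℝ))
    (hunion : X₁ ∪ X₂ = A) (hdisj : Disjoint X₁ X₂)
    (hX₁ : 3 ≤ Nat.card X₁) (hX₂ : 3 ≤ Nat.card X₂)
    (hmeet : (convexHull ℝ X₁ ∩ convexHull ℝ X₂).Nonempty) :
    ¬ ∃ S T : Set (Fin d → ℝ), S ⊆ A ∧ T ⊆ A ∧
      Nat.card S = d + 1 ∧ Nat.card T = d + 1 ∧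
      AffineIndependent ℝ (fun p : S => (p : Fin d → ℝ)) ∧
      AffineIndependent ℝ (fun p : T => (p : Fin d → ℝ)) ∧
      convexHull ℝ A = convexHull ℝ S ∪ convexHull ℝ T ∧
      Disjoint (interior (convexHull ℝ S)) (interior (convexHull ℝ T)) := by
  classical
  rintro ⟨S, T, hSA, hTA, hScard, hTcard, hSai, hTai, hcover, hint⟩
  have hmemF : ∀ x, x ∈ hfin.toFinset ↔ x ∈ A := fun x => hfin.mem_toFinset
  have hFcard : (hfin.toFinset).card = d + 2 := by
    rw [← Set.ncard_coe_finset, hfin.coe_toFinset, ← Nat.card_coe_set_eq, hcard]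
  obtain ⟨l, hl0, hl1, hlnz⟩ := aux_exists hfin hcard hgenpos
  -- uniqueness of the affine dependence (up to scalar)
  have hprop : ∀ w : (Fin d → ℝ) → ℝ, ∑ x ∈ hfin.toFinset, w x = 0 →
      ∑ x ∈ hfin.toFinset, w x • x = 0 →
      ∀ a ∈ A, ∀ x ∈ A, l a * w x = w a * l x := by
    intro w h0 h1 a ha x hx
    have h0' : ∑ z ∈ hfin.toFinset, (l a * w z - w a * l z) = 0 := by
      rw [Finset.sum_sub_distrib, ← Finset.mul_sum, ← Finset.mul_sum, h0, hl0,
        mul_zero, mul_zero, sub_zero]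
    have h1' : ∑ z ∈ hfin.toFinset, (l a * w z - w a * l z) • z = 0 := by
      have he : ∀ z : Fin d → ℝ, (l a * w z - w a * l z) • z =
          l a • (w z • z) - w a • (l z • z) := by
        intro z
        rw [sub_smul, smul_smul, smul_smul]
      rw [Finset.sum_congr rfl (fun z _ => he z), Finset.sum_sub_distrib,
        ← Finset.smul_sum, ← Finset.smul_sum, h1, hl1, smul_zero, smul_zero, sub_self]
    have hres := aux_vanish hfin hcard hgenpos _ h0' h1' ha (by ring) x hx
    linarith
  -- the Radon partition forces both sign classes of `l` to have ≥ 3 elements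
  obtain ⟨z, hz1, hz2⟩ := hmeet
  have hX₁A : X₁ ⊆ A := hunion ▸ Set.subset_union_left
  have hX₂A : X₂ ⊆ A := hunion ▸ Set.subset_union_right
  have hfin₁ := hfin.subset hX₁A
  have hfin₂ := hfin.subset hX₂A
  rw [hfin₁.convexHull_eq] at hz1
  rw [hfin₂.convexHull_eq] at hz2
  obtain ⟨u, hu0, hu1, hucm⟩ := hz1
  obtain ⟨v, hv0, hv1, hvcm⟩ := hz2
  rw [Finset.centerMass_eq_of_sum_1 _ _ hu1] at hucm
  rw [Finset.centerMass_eq_of_sum_1 _ _ hv1] at hvcm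
  simp only [id_eq] at hucm hvcm
  set u₀ : (Fin d → ℝ) → ℝ := fun x => if x ∈ hfin₁.toFinset then u x else 0 with hu₀def
  set v₀ : (Fin d → ℝ) → ℝ := fun x => if x ∈ hfin₂.toFinset then v x else 0 with hv₀def
  have hsub₁ : hfin₁.toFinset ⊆ hfin.toFinset := fun x hx =>
    hfin.mem_toFinset.2 (hX₁A (hfin₁.mem_toFinset.1 hx))
  have hsub₂ : hfin₂.toFinset ⊆ hfin.toFinset := fun x hx =>
    hfin.mem_toFinset.2 (hX₂A (hfin₂.mem_toFinset.1 hx))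
  have hsum_u : ∑ x ∈ hfin.toFinset, u₀ x = 1 := by
    simp only [hu₀def]
    rw [Finset.sum_ite_mem, Finset.inter_eq_right.2 hsub₁]
    exact hu1
  have hsum_v : ∑ x ∈ hfin.toFinset, v₀ x = 1 := by
    simp only [hv₀def]
    rw [Finset.sum_ite_mem, Finset.inter_eq_right.2 hsub₂]
    exact hv1
  have hsum_u1 : ∑ x ∈ hfin.toFinset, u₀ x • x = z := by
    have he : ∀ x : Fin d → ℝ, u₀ x • x = if x ∈ hfin₁.toFinset then u x • x else 0 := by
      intro x; simp only [hu₀def]; split_ifs <;> simp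
    rw [Finset.sum_congr rfl (fun x _ => he x), Finset.sum_ite_mem,
      Finset.inter_eq_right.2 hsub₁]
    exact hucm
  have hsum_v1 : ∑ x ∈ hfin.toFinset, v₀ x • x = z := by
    have he : ∀ x : Fin d → ℝ, v₀ x • x = if x ∈ hfin₂.toFinset then v x • x else 0 := by
      intro x; simp only [hv₀def]; split_ifs <;> simp
    rw [Finset.sum_congr rfl (fun x _ => he x), Finset.sum_ite_mem,
      Finset.inter_eq_right.2 hsub₂]
    exact hvcm
  have hδ0 : ∑ x ∈ hfin.toFinset, (u₀ x - v₀ x) = 0 := by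
    rw [Finset.sum_sub_distrib, hsum_u, hsum_v, sub_self]
  have hδ1 : ∑ x ∈ hfin.toFinset, (u₀ x - v₀ x) • x = 0 := by
    rw [Finset.sum_congr rfl (fun x _ => sub_smul (u₀ x) (v₀ x) x),
      Finset.sum_sub_distrib, hsum_u1, hsum_v1, sub_self]
  obtain ⟨a₁, ha₁F, ha₁pos⟩ : ∃ y ∈ hfin₁.toFinset, 0 < u y := by
    by_contra h
    push_neg at h
    have hle : ∑ x ∈ hfin₁.toFinset, u x ≤ 0 := Finset.sum_nonpos h
    rw [hu1] at hle; linarith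
  have ha₁X₁ : a₁ ∈ X₁ := hfin₁.mem_toFinset.1 ha₁F
  have ha₁A : a₁ ∈ A := hX₁A ha₁X₁
  have hv₀zero : ∀ b ∈ X₁, v₀ b = 0 := by
    intro b hb
    have hbn : b ∉ hfin₂.toFinset := fun hm =>
      (Set.disjoint_left.1 hdisj hb) (hfin₂.mem_toFinset.1 hm)
    simp only [hv₀def, if_neg hbn]
  have hu₀zero : ∀ b ∈ X₂, u₀ b = 0 := by
    intro b hb
    have hbn : b ∉ hfin₁.toFinset := fun hm =>
      (Set.disjoint_left.1 hdisj (hfin₁.mem_toFinset.1 hm)) hb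
    simp only [hu₀def, if_neg hbn]
  have hδa₁ : 0 < u₀ a₁ - v₀ a₁ := by
    have h1 : u₀ a₁ = u a₁ := by simp only [hu₀def, if_pos ha₁F]
    rw [h1, hv₀zero a₁ ha₁X₁, sub_zero]
    exact ha₁pos
  have hidX : ∀ x ∈ A, l a₁ * (u₀ x - v₀ x) = (u₀ a₁ - v₀ a₁) * l x :=
    hprop _ hδ0 hδ1 a₁ ha₁A
  have hpos₁ : ∀ b ∈ X₁, 0 < l b * l a₁ := by
    intro b hb
    have hbA := hX₁A hb
    have hid := hidX b hbA
    have hδb : 0 ≤ u₀ b - v₀ b := by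
      rw [hv₀zero b hb, sub_zero]
      simp only [hu₀def]
      split_ifs with h
      · exact hu0 b (hfin₁.mem_toFinset.1 h)
      · exact le_refl 0
    have e3 : (u₀ a₁ - v₀ a₁) * (l b * l a₁) = (u₀ b - v₀ b) * (l a₁ * l a₁) := by
      linear_combination (-(l a₁)) * hid
    have h4 : 0 ≤ l b * l a₁ := by
      by_contra hcon
      push_neg at hcon
      have h5 : (u₀ a₁ - v₀ a₁) * (l b * l a₁) < 0 := mul_neg_of_pos_of_neg hδa₁ hcon
      have h6 : 0 ≤ (u₀ b - v₀ b) * (l a₁ * l a₁) :=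
        mul_nonneg hδb (mul_self_nonneg _)
      linarith
    exact lt_of_le_of_ne h4 (Ne.symm (mul_ne_zero (hlnz b hbA) (hlnz a₁ ha₁A)))
  have hneg₂ : ∀ b ∈ X₂, l b * l a₁ < 0 := by
    intro b hb
    have hbA := hX₂A hb
    have hid := hidX b hbA
    have hδb : u₀ b - v₀ b ≤ 0 := by
      rw [hu₀zero b hb, zero_sub, neg_nonpos]
      simp only [hv₀def]
      split_ifs with h
      · exact hv0 b (hfin₂.mem_toFinset.1 h)
      · exact le_refl 0
    have e3 : (u₀ a₁ - v₀ a₁) * (l b * l a₁) = (u₀ b - v₀ b) * (l a₁ * l a₁) := by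
      linear_combination (-(l a₁)) * hid
    have h4 : l b * l a₁ ≤ 0 := by
      by_contra hcon
      push_neg at hcon
      have h5 : 0 < (u₀ a₁ - v₀ a₁) * (l b * l a₁) := mul_pos hδa₁ hcon
      have h6 : (u₀ b - v₀ b) * (l a₁ * l a₁) ≤ 0 :=
        mul_nonpos_of_nonpos_of_nonneg hδb (mul_self_nonneg _)
      linarith
    exact lt_of_le_of_ne h4 (mul_ne_zero (hlnz b hbA) (hlnz a₁ ha₁A))
  set P := hfin.toFinset.filter (fun q => 0 < l q) with hPdef
  set N := hfin.toFinset.filter (fun q => l q < 0) with hNdef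
  have hsetcard : ∀ Y : Set (Fin d → ℝ), 3 ≤ Nat.card Y →
      ∀ Q : Finset (Fin d → ℝ), Y ⊆ ↑Q → 3 ≤ Q.card := by
    intro Y h3 Q hYQ
    have h1 : Y.ncard ≤ Q.card := by
      rw [← Set.ncard_coe_finset]
      exact Set.ncard_le_ncard hYQ Q.finite_toSet
    rw [← Nat.card_coe_set_eq] at h1
    omega
  have hPN : 3 ≤ P.card ∧ 3 ≤ N.card := by
    rcases lt_or_gt_of_ne (hlnz a₁ ha₁A) with hla₁ | hla₁
    · constructor
      · apply hsetcard X₂ hX₂ P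
        intro b hb
        have hb2 := hneg₂ b hb
        have hlb : 0 < l b := by nlinarith
        exact Finset.mem_coe.2 (Finset.mem_filter.2 ⟨hfin.mem_toFinset.2 (hX₂A hb), hlb⟩)
      · apply hsetcard X₁ hX₁ N
        intro b hb
        have hb2 := hpos₁ b hb
        have hlb : l b < 0 := by nlinarith
        exact Finset.mem_coe.2 (Finset.mem_filter.2 ⟨hfin.mem_toFinset.2 (hX₁A hb), hlb⟩)
    · constructor
      · apply hsetcard X₁ hX₁ P
        intro b hb
        have hb2 := hpos₁ b hb
        have hlb : 0 < l b := by nlinarith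
        exact Finset.mem_coe.2 (Finset.mem_filter.2 ⟨hfin.mem_toFinset.2 (hX₁A hb), hlb⟩)
      · apply hsetcard X₂ hX₂ N
        intro b hb
        have hb2 := hneg₂ b hb
        have hlb : l b < 0 := by nlinarith
        exact Finset.mem_coe.2 (Finset.mem_filter.2 ⟨hfin.mem_toFinset.2 (hX₂A hb), hlb⟩)
  obtain ⟨hP3, hN3⟩ := hPN
  -- extract the missing points of S and T
  have hextract : ∀ Y : Set (Fin d → ℝ), Y ⊆ A → Nat.card Y = d + 1 →
      ∃ y, y ∈ A ∧ y ∉ Y ∧ insert y Y = A := by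
    intro Y hYA hYcard
    have hfinY := hfin.subset hYA
    have hYn : Y.ncard = d + 1 := by rw [← Nat.card_coe_set_eq, hYcard]
    have hAn : A.ncard = d + 2 := by rw [← Nat.card_coe_set_eq, hcard]
    obtain ⟨y, hyA, hyY⟩ : ∃ y ∈ A, y ∉ Y := by
      by_contra h
      push_neg at h
      have hAY : A = Y := Set.Subset.antisymm h hYA
      rw [hAY, hYn] at hAn; omega
    refine ⟨y, hyA, hyY, ?_⟩
    apply Set.eq_of_subset_of_ncard_le (Set.insert_subset hyA hYA) ?_ hfin
    rw [Set.ncard_insert_of_notMem hyY hfinY, hYn, hAn]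
  obtain ⟨s, hsA, hsS, hinsS⟩ := hextract S hSA hScard
  obtain ⟨t, htA, htT, hinsT⟩ := hextract T hTA hTcard
  have hsF : s ∈ hfin.toFinset := hfin.mem_toFinset.2 hsA
  have htF : t ∈ hfin.toFinset := hfin.mem_toFinset.2 htA
  by_cases hST : S = T
  · -- the two simplices coincide; then `s` is inside the simplex on `S`
    rw [← hST, Set.union_self] at hcover
    have hsCS : s ∈ convexHull ℝ S := by rw [← hcover]; exact subset_convexHull ℝ A hsA
    have hfinS := hfin.subset hSA
    rw [hfinS.convexHull_eq] at hsCS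
    obtain ⟨α, hα0, hα1, hαcm⟩ := hsCS
    rw [Finset.centerMass_eq_of_sum_1 _ _ hα1] at hαcm
    simp only [id_eq] at hαcm
    have hsubS : hfinS.toFinset ⊆ hfin.toFinset := fun x hx =>
      hfin.mem_toFinset.2 (hSA (hfinS.mem_toFinset.1 hx))
    set δ : (Fin d → ℝ) → ℝ :=
      fun x => (if x ∈ hfinS.toFinset then α x else 0) - (if x = s then 1 else 0) with hδdef
    have hδ0' : ∑ x ∈ hfin.toFinset, δ x = 0 := by
      simp only [hδdef]
      rw [Finset.sum_sub_distrib, Finset.sum_ite_mem, Finset.inter_eq_right.2 hsubS, hα1,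
        Finset.sum_ite_eq' hfin.toFinset s (fun _ => (1 : ℝ)), if_pos hsF, sub_self]
    have hδ1' : ∑ x ∈ hfin.toFinset, δ x • x = 0 := by
      simp only [hδdef]
      have he : ∀ x : Fin d → ℝ,
          ((if x ∈ hfinS.toFinset then α x else 0) - (if x = s then 1 else 0)) • x
          = (if x ∈ hfinS.toFinset then α x • x else 0) -
            (if x = s then (1 : ℝ) • x else 0) := by
        intro x
        rw [sub_smul]
        congr 1 <;> (split_ifs <;> simp)
      rw [Finset.sum_congr rfl fun x _ => he x, Finset.sum_sub_distrib, Finset.sum_ite_mem,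
        Finset.inter_eq_right.2 hsubS, hαcm,
        Finset.sum_ite_eq' hfin.toFinset s (fun x => (1 : ℝ) • x), if_pos hsF, one_smul,
        sub_self]
    have hδs : δ s = -1 := by
      simp only [hδdef]
      rw [if_neg (fun h => hsS (hfinS.mem_toFinset.1 h))]
      simp
    have hid := hprop _ hδ0' hδ1' s hsA
    have hSneg : ∀ b ∈ S, l s * l b < 0 := by
      intro b hb
      have hbA := hSA hb
      have hidb := hid b hbA
      rw [hδs] at hidb
      have hδbv : δ b = α b := by
        simp only [hδdef]
        rw [if_pos (hfinS.mem_toFinset.2 hb),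
          if_neg (fun h => hsS (by rw [← h]; exact hb)), sub_zero]
      rw [hδbv] at hidb
      -- hidb : l s * α b = -1 * l b
      have hαb : 0 ≤ α b := hα0 b hb
      have e1 : l s * l b = -((l s * l s) * α b) := by linear_combination (l s) * hidb
      have h7 : l s * l b ≤ 0 := by
        have : 0 ≤ (l s * l s) * α b := mul_nonneg (mul_self_nonneg _) hαb
        linarith
      exact lt_of_le_of_ne h7 (mul_ne_zero (hlnz s hsA) (hlnz b hbA))
    rcases lt_or_gt_of_ne (hlnz s hsA) with hls | hls
    · -- l s < 0 ⇒ every point of S has positive coefficient ⇒ N ⊆ {s}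
      have hNsub : N ⊆ {s} := by
        intro q hq
        rw [hNdef, Finset.mem_filter] at hq
        obtain ⟨hqF, hqneg⟩ := hq
        have hqA : q ∈ A := hfin.mem_toFinset.1 hqF
        rw [Finset.mem_singleton]
        by_contra hne
        have hqS : q ∈ S := by
          have hq2 : q ∈ insert s S := by rw [hinsS]; exact hqA
          rcases Set.mem_insert_iff.1 hq2 with h | h
          · exact absurd h hne
          · exact h
        have := hSneg q hqS
        nlinarith
      have hle := Finset.card_le_card hNsub
      rw [Finset.card_singleton] at hle
      omega
    · -- l s > 0 ⇒ P ⊆ {s}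
      have hPsub : P ⊆ {s} := by
        intro q hq
        rw [hPdef, Finset.mem_filter] at hq
        obtain ⟨hqF, hqpos⟩ := hq
        have hqA : q ∈ A := hfin.mem_toFinset.1 hqF
        rw [Finset.mem_singleton]
        by_contra hne
        have hqS : q ∈ S := by
          have hq2 : q ∈ insert s S := by rw [hinsS]; exact hqA
          rcases Set.mem_insert_iff.1 hq2 with h | h
          · exact absurd h hne
          · exact h
        have := hSneg q hqS
        nlinarith
      have hle := Finset.card_le_card hPsub
      rw [Finset.card_singleton] at hle
      omega
  -- now S ≠ T
  have hst : s ≠ t := by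
    intro h
    apply hST
    have h1 : S = A \ {s} := by
      ext q
      constructor
      · intro hq
        exact ⟨hSA hq, fun he => hsS (Set.mem_singleton_iff.1 he ▸ hq)⟩
      · rintro ⟨hqA, hqs⟩
        have hq2 : q ∈ insert s S := by rw [hinsS]; exact hqA
        rcases Set.mem_insert_iff.1 hq2 with h2 | h2
        · exact absurd h2 (fun h3 => hqs (Set.mem_singleton_iff.2 h2))
        · exact h2
    have h2 : T = A \ {t} := by
      ext q
      constructor
      · intro hq
        exact ⟨hTA hq, fun he => htT (Set.mem_singleton_iff.1 he ▸ hq)⟩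
      · rintro ⟨hqA, hqt⟩
        have hq2 : q ∈ insert t T := by rw [hinsT]; exact hqA
        rcases Set.mem_insert_iff.1 hq2 with h2 | h2
        · exact absurd h2 (fun h3 => hqt (Set.mem_singleton_iff.2 h2))
        · exact h2
    rw [h1, h2, h]
  -- the same-sign case : λ_s λ_t > 0 leads to an uncovered point
  have hsame : 0 < l s * l t → False := by
    intro hprod
    obtain ⟨p, hpF, hps, hpt, hpls⟩ :
        ∃ p, p ∈ hfin.toFinset ∧ p ≠ s ∧ p ≠ t ∧ 0 < l p * l s := by
      rcases lt_or_gt_of_ne (hlnz s hsA) with hls | hls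
      · have h1 : 1 ≤ (N \ {s, t}).card := by
          have h2 := Finset.le_card_sdiff ({s, t} : Finset (Fin d → ℝ)) N
          have h3 : ({s, t} : Finset (Fin d → ℝ)).card ≤ 2 := Finset.card_insert_le _ _
          have h4 : ({t} : Finset (Fin d → ℝ)).card = 1 := Finset.card_singleton _
          omega
        obtain ⟨p, hp⟩ := Finset.card_pos.1 (by omega : 0 < (N \ {s, t}).card)
        rw [Finset.mem_sdiff, hNdef, Finset.mem_filter] at hp
        obtain ⟨⟨hpF, hpneg⟩, hpnot⟩ := hp
        simp only [Finset.mem_insert, Finset.mem_singleton, not_or] at hpnot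
        exact ⟨p, hpF, hpnot.1, hpnot.2, mul_pos_of_neg_of_neg hpneg hls⟩
      · have h1 : 1 ≤ (P \ {s, t}).card := by
          have h2 := Finset.le_card_sdiff ({s, t} : Finset (Fin d → ℝ)) P
          have h3 : ({s, t} : Finset (Fin d → ℝ)).card ≤ 2 := Finset.card_insert_le _ _
          have h4 : ({t} : Finset (Fin d → ℝ)).card = 1 := Finset.card_singleton _
          omega
        obtain ⟨p, hp⟩ := Finset.card_pos.1 (by omega : 0 < (P \ {s, t}).card)
        rw [Finset.mem_sdiff, hPdef, Finset.mem_filter] at hp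
        obtain ⟨⟨hpF, hppos⟩, hpnot⟩ := hp
        simp only [Finset.mem_insert, Finset.mem_singleton, not_or] at hpnot
        exact ⟨p, hpF, hpnot.1, hpnot.2, mul_pos hppos hls⟩
    have hpA : p ∈ A := hfin.mem_toFinset.1 hpF
    have hplt : 0 < l p * l t := by
      have hls2 : 0 < l s * l s := mul_self_pos.2 (hlnz s hsA)
      by_contra hc
      push_neg at hc
      nlinarith [mul_pos hpls hprod]
    -- the centroid of A \ {p}
    set γ : (Fin d → ℝ) → ℝ :=
      fun x => if x ∈ hfin.toFinset.erase p then ((d : ℝ) + 1)⁻¹ else 0 with hγdef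
    have hcarderase : (hfin.toFinset.erase p).card = d + 1 := by
      rw [Finset.card_erase_of_mem hpF, hFcard]
      omega
    have hγsum : ∑ x ∈ hfin.toFinset, γ x = 1 := by
      simp only [hγdef]
      rw [Finset.sum_ite_mem, Finset.inter_eq_right.2 (Finset.erase_subset _ _),
        Finset.sum_const, hcarderase, nsmul_eq_mul]
      have : ((d : ℝ) + 1) ≠ 0 := by positivity
      push_cast
      field_simp
    set y := ∑ x ∈ hfin.toFinset, γ x • x with hydef
    have hyA : y ∈ convexHull ℝ A := by
      rw [hfin.convexHull_eq]
      refine ⟨γ, fun q _ => ?_, hγsum, ?_⟩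
      · simp only [hγdef]
        split_ifs
        · positivity
        · exact le_refl 0
      · rw [Finset.centerMass_eq_of_sum_1 _ _ hγsum]
        simp only [id_eq]
        exact hydef.symm
    rw [hcover] at hyA
    have hblock : ∀ (W : Set (Fin d → ℝ)) (r : Fin d → ℝ), W ⊆ A → r ∈ A → r ∉ W →
        r ≠ p → 0 < l p * l r → y ∈ convexHull ℝ W → False := by
      intro W r hWA hrA hrW hrp hplr hyW
      have hfinW := hfin.subset hWA
      rw [hfinW.convexHull_eq] at hyW
      obtain ⟨α, hα0, hα1, hαcm⟩ := hyW
      rw [Finset.centerMass_eq_of_sum_1 _ _ hα1] at hαcm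
      simp only [id_eq] at hαcm
      have hsubW : hfinW.toFinset ⊆ hfin.toFinset := fun q hq =>
        hfin.mem_toFinset.2 (hWA (hfinW.mem_toFinset.1 hq))
      set δ : (Fin d → ℝ) → ℝ :=
        fun x => γ x - (if x ∈ hfinW.toFinset then α x else 0) with hδdef
      have hδ0' : ∑ x ∈ hfin.toFinset, δ x = 0 := by
        simp only [hδdef]
        rw [Finset.sum_sub_distrib, hγsum, Finset.sum_ite_mem,
          Finset.inter_eq_right.2 hsubW, hα1, sub_self]
      have hδ1' : ∑ x ∈ hfin.toFinset, δ x • x = 0 := by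
        simp only [hδdef]
        have he : ∀ x : Fin d → ℝ,
            (γ x - (if x ∈ hfinW.toFinset then α x else 0)) • x
            = γ x • x - (if x ∈ hfinW.toFinset then α x • x else 0) := by
          intro x
          rw [sub_smul]
          congr 1
          split_ifs <;> simp
        rw [Finset.sum_congr rfl fun x _ => he x, Finset.sum_sub_distrib, Finset.sum_ite_mem,
          Finset.inter_eq_right.2 hsubW, hαcm, ← hydef, sub_self]
      have hδr : δ r = ((d : ℝ) + 1)⁻¹ := by
        simp only [hδdef, hγdef]
        rw [if_pos (Finset.mem_erase.2 ⟨hrp, hfin.mem_toFinset.2 hrA⟩),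
          if_neg (fun h => hrW (hfinW.mem_toFinset.1 h)), sub_zero]
      have hδrpos : 0 < δ r := by rw [hδr]; positivity
      have hδp : δ p ≤ 0 := by
        simp only [hδdef, hγdef]
        rw [if_neg (fun h => (Finset.mem_erase.1 h).1 rfl), zero_sub, neg_nonpos]
        split_ifs with h
        · exact hα0 p (hfinW.mem_toFinset.1 h)
        · exact le_refl 0
      have hid := hprop _ hδ0' hδ1' r hrA p hpA
      -- hid : l r * δ p = δ r * l p
      have e3 : (l r * l r) * δ p = δ r * (l p * l r) := by
        linear_combination (l r) * hid
      have e2 : 0 < δ r * (l p * l r) := mul_pos hδrpos hplr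
      have e4 : (l r * l r) * δ p ≤ 0 :=
        mul_nonpos_of_nonneg_of_nonpos (mul_self_nonneg _) hδp
      linarith
    rcases hyA with hyS | hyT
    · exact hblock S s hSA hsA hsS (Ne.symm hps) hpls hyS
    · exact hblock T t hTA htA htT (Ne.symm hpt) hplt hyT
  -- the mixed-sign case : construct a common interior point
  have hkey : ∀ (S' T' : Set (Fin d → ℝ)) (s' t' : Fin d → ℝ),
      S' ⊆ A → Nat.card S' = d + 1 →
      AffineIndependent ℝ (fun p : S' => (p : Fin d → ℝ)) →
      T' ⊆ A → Nat.card T' = d + 1 →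
      AffineIndependent ℝ (fun p : T' => (p : Fin d → ℝ)) →
      insert s' S' = A → s' ∉ S' → insert t' T' = A → t' ∉ T' →
      0 < l s' → l t' < 0 →
      Disjoint (interior (convexHull ℝ S')) (interior (convexHull ℝ T')) → False := by
    intro S' T' s' t' hS'A hS'card hS'ai hT'A hT'card hT'ai hinsS' hs'S' hinsT' ht'T'
      hls' hlt' hD
    have hs'A : s' ∈ A := by rw [← hinsS']; exact Set.mem_insert _ _
    have ht'A : t' ∈ A := by rw [← hinsT']; exact Set.mem_insert _ _
    have hs't' : s' ≠ t' := by intro h; rw [h] at hls'; linarith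
    have hfinS' := hfin.subset hS'A
    have hfinT' := hfin.subset hT'A
    have ht'F : t' ∈ hfin.toFinset := hfin.mem_toFinset.2 ht'A
    set α : (Fin d → ℝ) → ℝ := fun x =>
      if x = s' then 0 else if x = t' then -l t'
      else if x ∈ hfin.toFinset then |l x| + 1 else 0 with hαdef
    have hα_nonneg : ∀ x, 0 ≤ α x := by
      intro x
      simp only [hαdef]
      split_ifs
      · exact le_refl 0
      · linarith
      · positivity
      · exact le_refl 0
    have hαs' : α s' = 0 := by simp only [hαdef]; simp
    have hαt' : α t' = -l t' := by
      simp only [hαdef]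
      rw [if_neg (fun h => hs't' h.symm)]
      simp
    set M := ∑ x ∈ hfin.toFinset, α x with hMdef
    have hMpos : 0 < M := by
      have h1 : α t' ≤ M := Finset.single_le_sum (fun q _ => hα_nonneg q) ht'F
      have h2 : 0 < α t' := by rw [hαt']; linarith
      linarith
    have hFS' : hfin.toFinset = insert s' hfinS'.toFinset := by
      apply Finset.coe_injective
      rw [Finset.coe_insert, hfin.coe_toFinset, hfinS'.coe_toFinset, hinsS']
    have hFT' : hfin.toFinset = insert t' hfinT'.toFinset := by
      apply Finset.coe_injective
      rw [Finset.coe_insert, hfin.coe_toFinset, hfinT'.coe_toFinset, hinsT']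
    have hs'FS' : s' ∉ hfinS'.toFinset := fun h => hs'S' (hfinS'.mem_toFinset.1 h)
    have ht'FT' : t' ∉ hfinT'.toFinset := fun h => ht'T' (hfinT'.mem_toFinset.1 h)
    have hsumS' : ∑ x ∈ hfinS'.toFinset, α x = M := by
      have h1 := hMdef
      rw [hFS', Finset.sum_insert hs'FS', hαs', zero_add] at h1
      exact h1.symm
    set y := M⁻¹ • ∑ x ∈ hfin.toFinset, α x • x with hydef
    have hyvecS' : ∑ x ∈ hfinS'.toFinset, (α x / M) • x = y := by
      have h1 : ∑ x ∈ hfinS'.toFinset, α x • x = ∑ x ∈ hfin.toFinset, α x • x := by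
        rw [hFS', Finset.sum_insert hs'FS', hαs', zero_smul, zero_add]
      calc ∑ x ∈ hfinS'.toFinset, (α x / M) • x
          = M⁻¹ • ∑ x ∈ hfinS'.toFinset, α x • x := by
            rw [Finset.smul_sum]
            refine Finset.sum_congr rfl (fun q _ => ?_)
            rw [smul_smul, div_eq_inv_mul]
        _ = y := by rw [h1, hydef]
    have hyintS : y ∈ interior (convexHull ℝ S') := by
      rw [← hyvecS']
      apply aux_interior hfinS' hS'ai hS'card
      · rw [← Finset.sum_div, hsumS', div_self (ne_of_gt hMpos)]
      · intro q hq
        have hqs' : q ≠ s' := fun h => hs'S' (h ▸ hq)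
        have hqpos : 0 < α q := by
          simp only [hαdef]
          rw [if_neg hqs']
          split_ifs with h2 h3
          · linarith
          · positivity
          · exact absurd (hfin.mem_toFinset.2 (hS'A hq)) h3
        exact div_pos hqpos hMpos
    have hβt' : α t' + l t' = 0 := by rw [hαt']; ring
    have hsumβF : ∑ x ∈ hfin.toFinset, (α x + l x) = M := by
      rw [Finset.sum_add_distrib, hl0, add_zero, hMdef]
    have hsumT' : ∑ x ∈ hfinT'.toFinset, (α x + l x) = M := by
      have h1 := hsumβF
      rw [hFT', Finset.sum_insert ht'FT', hβt', zero_add] at h1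
      exact h1
    have hvecβF : ∑ x ∈ hfin.toFinset, (α x + l x) • x = ∑ x ∈ hfin.toFinset, α x • x := by
      rw [Finset.sum_congr rfl (fun q _ => add_smul (α q) (l q) q),
        Finset.sum_add_distrib, hl1, add_zero]
    have hyvecT' : ∑ x ∈ hfinT'.toFinset, ((α x + l x) / M) • x = y := by
      have h1 : ∑ x ∈ hfinT'.toFinset, (α x + l x) • x = ∑ x ∈ hfin.toFinset, α x • x := by
        rw [← hvecβF, hFT', Finset.sum_insert ht'FT', hβt', zero_smul, zero_add]
      calc ∑ x ∈ hfinT'.toFinset, ((α x + l x) / M) • x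
          = M⁻¹ • ∑ x ∈ hfinT'.toFinset, (α x + l x) • x := by
            rw [Finset.smul_sum]
            refine Finset.sum_congr rfl (fun q _ => ?_)
            rw [smul_smul, div_eq_inv_mul]
        _ = y := by rw [h1, hydef]
    have hyintT : y ∈ interior (convexHull ℝ T') := by
      rw [← hyvecT']
      apply aux_interior hfinT' hT'ai hT'card
      · rw [← Finset.sum_div, hsumT', div_self (ne_of_gt hMpos)]
      · intro q hq
        have hqt' : q ≠ t' := fun h => ht'T' (h ▸ hq)
        have hqpos : 0 < α q + l q := by
          by_cases h1 : q = s'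
          · rw [h1, hαs', zero_add]; exact hls'
          · have hα_eval : α q = |l q| + 1 := by
              simp only [hαdef]
              rw [if_neg h1, if_neg hqt', if_pos (hfin.mem_toFinset.2 (hT'A hq))]
            rw [hα_eval]
            have := neg_abs_le (l q)
            linarith
        exact div_pos hqpos hMpos
    exact Set.disjoint_left.1 hD hyintS hyintT
  rcases lt_or_gt_of_ne (hlnz s hsA) with hls | hls <;>
    rcases lt_or_gt_of_ne (hlnz t htA) with hlt | hlt
  · exact hsame (mul_pos_of_neg_of_neg hls hlt)
  · exact hkey T S t s hTA hTcard hTai hSA hScard hSai hinsT htT hinsS hsS hlt hls hint.symm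
  · exact hkey S T s t hSA hScard hSai hTA hTcard hTai hinsS hsS hinsT htT hls hlt hint
  · exact hsame (mul_pos hls hlt)
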